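/- If G is a connected graph and H is a subdivision of G, then rx_3(H) ≤ rx_3(G) + |V(H)| − |V(G)|. -/

import Mathlib

open SimpleGraph

universe u

/-- `T` is a rainbow `S`-tree: a tree (as a subgraph of `G`) containing all vertices of `S`
whose edges receive pairwise distinct colors under `c`. -/
def SimpleGraph.IsRainbowSTree {V : Type u} {α : Type*} (G : SimpleGraph V)
    (c : Sym2 V → α) (S : Set V) (T : G.Subgraph) : Prop :=
  T.coe.IsTree ∧ S ⊆ T.verts ∧ Set.InjOn c T.edgeSet

/-- `c` is a `k`-rainbow coloring of `G`: every `k`-subset of vertices has a rainbow tree. -/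
def SimpleGraph.IsRainbowColoring {V : Type u} {α : Type*} [DecidableEq V]
    (G : SimpleGraph V) (k : ℕ) (c : Sym2 V → α) : Prop :=
  ∀ S : Finset V, S.card = k → ∃ T : G.Subgraph, G.IsRainbowSTree c ↑S T

/-- The `k`-rainbow index: minimum number of colors in a `k`-rainbow coloring. -/
noncomputable def SimpleGraph.rxk {V : Type u} [DecidableEq V]
    (G : SimpleGraph V) (k : ℕ) : ℕ :=
  sInf {q | ∃ c : Sym2 V → Fin q, G.IsRainbowColoring k c}

/-- Steiner distance of a vertex set `S` : minimum size of a tree of `G` connecting `S`. -/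
noncomputable def SimpleGraph.steinerDist {V : Type u} (G : SimpleGraph V) (S : Set V) : ℕ :=
  sInf {m | ∃ T : G.Subgraph, T.coe.IsTree ∧ S ⊆ T.verts ∧ T.edgeSet.ncard = m}

/-- The `k`-Steiner diameter: maximum Steiner distance over all `k`-subsets. -/
noncomputable def SimpleGraph.sdiam {V : Type u} [DecidableEq V]
    (G : SimpleGraph V) (k : ℕ) : ℕ :=
  sSup {d | ∃ S : Finset V, S.card = k ∧ G.steinerDist ↑S = d}

/-- A graph together with its vertex type. -/
def GraphSig : Type (u + 1) := Σ V : Type u, SimpleGraph V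

/-- `SubdivisionStep G H` : `H` is obtained from `G` by subdividing one edge `uv`,
i.e. deleting `uv`, adding a new vertex (corresponding to `none` under an equivalence
`W ≃ Option V`) and joining it to `u` and `v`. -/
def SubdivisionStep (G H : GraphSig.{u}) : Prop :=
  ∃ (u v : G.1), G.2.Adj u v ∧ ∃ f : H.1 ≃ Option G.1,
    (∀ a b : G.1, H.2.Adj (f.symm (some a)) (f.symm (some b)) ↔
        (G.2.Adj a b ∧ s(a, b) ≠ s(u, v))) ∧
    (∀ a : G.1, H.2.Adj (f.symm none) (f.symm (some a)) ↔ (a = u ∨ a = v))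

/-- `H` is a subdivision of `G` : obtained by a (possibly empty) sequence of
edge subdivisions. -/
def IsSubdivision {V W : Type u} (G : SimpleGraph V) (H : SimpleGraph W) : Prop :=
  Relation.ReflTransGen SubdivisionStep ⟨V, G⟩ ⟨W, H⟩


set_option linter.unusedSectionVars false
set_option maxHeartbeats 1000000

section Block1
variable {V : Type u}

lemma walk_reachable_delete {G : SimpleGraph V} {a b : V}
    (hr : (G \ fromEdgeSet {s(a, b)}).Reachable a b) :
    ∀ {x y : V}, G.Walk x y → (G \ fromEdgeSet {s(a, b)}).Reachable x y := by
  intro x y p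
  induction p with
  | nil => exact Reachable.refl _
  | @cons x z y h q ih =>
    refine Reachable.trans ?_ ih
    by_cases he : s(x, z) = s(a, b)
    · rw [Sym2.eq_iff] at he
      rcases he with ⟨rfl, rfl⟩ | ⟨rfl, rfl⟩
      · exact hr
      · exact hr.symm
    · exact Adj.reachable (by rw [sdiff_adj]; exact ⟨h, by simp [fromEdgeSet_adj, he]⟩)

lemma connected_delete {G : SimpleGraph V} {a b : V} (hc : G.Connected)
    (hr : (G \ fromEdgeSet {s(a, b)}).Reachable a b) :
    (G \ fromEdgeSet {s(a, b)}).Connected := by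
  haveI := hc.nonempty
  exact Connected.mk fun x y => (hc.preconnected x y).elim fun p => walk_reachable_delete hr p

lemma exists_spanning_tree_aux [Fintype V] :
    ∀ (n : ℕ) (G : SimpleGraph V), G.edgeSet.ncard ≤ n → G.Connected →
      ∃ T : SimpleGraph V, T ≤ G ∧ T.IsTree := by
  intro n
  induction n with
  | zero =>
    intro G hn hc
    have hemp : G.edgeSet = ∅ := by
      rw [← Set.ncard_eq_zero (G.edgeSet.toFinite)] at *
      omega
    rw [edgeSet_eq_empty] at hemp
    subst hemp
    exact ⟨⊥, le_rfl, hc, isAcyclic_bot⟩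
  | succ n ih =>
    intro G hn hc
    by_cases hac : G.IsAcyclic
    · exact ⟨G, le_rfl, hc, hac⟩
    · rw [isAcyclic_iff_forall_adj_isBridge] at hac
      push_neg at hac
      obtain ⟨x, y, hadj, hbr⟩ := hac
      have hr : (G \ fromEdgeSet {s(x, y)}).Reachable x y := by
        by_contra hre
        exact hbr hre
      have hE : (G \ fromEdgeSet {s(x, y)}).edgeSet = G.edgeSet \ {s(x, y)} := by
        rw [edgeSet_sdiff, edgeSet_fromEdgeSet, edgeSet_sdiff_sdiff_isDiag]
      have hcard : (G \ fromEdgeSet {s(x, y)}).edgeSet.ncard ≤ n := by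
        rw [hE]
        have h1 : s(x, y) ∈ G.edgeSet := hadj
        have h2 := Set.ncard_diff_singleton_add_one h1 (G.edgeSet.toFinite)
        omega
      obtain ⟨T, hle, hT⟩ := ih _ hcard (connected_delete hc hr)
      exact ⟨T, hle.trans sdiff_le, hT⟩
end Block1

section Block2
lemma subgraph_spanning_tree {W : Type u} [Fintype W] {H : SimpleGraph W} (A : H.Subgraph)
    (hA : A.Connected) :
    ∃ B : H.Subgraph, B.verts = A.verts ∧ B.edgeSet ⊆ A.edgeSet ∧ B.coe.IsTree := by
  classical
  haveI : Fintype A.verts := A.verts.toFinite.fintype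
  obtain ⟨T, hle, hT⟩ := exists_spanning_tree_aux (A.coe.edgeSet.ncard) A.coe le_rfl hA
  refine ⟨⟨A.verts, fun w1 w2 => ∃ (h1 : w1 ∈ A.verts) (h2 : w2 ∈ A.verts),
      T.Adj ⟨w1, h1⟩ ⟨w2, h2⟩, ?_, ?_, ?_⟩, rfl, ?_, ?_⟩
  · rintro w1 w2 ⟨h1, h2, h⟩
    exact A.adj_sub ((hle h))
  · rintro w1 w2 ⟨h1, h2, h⟩
    exact h1
  · refine ⟨?_⟩; rintro w1 w2 ⟨h1, h2, h⟩
    exact ⟨h2, h1, h.symm⟩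
  · intro e he
    induction e with
    | _ w1 w2 =>
      rw [Subgraph.mem_edgeSet] at he ⊢
      obtain ⟨h1, h2, h⟩ := he
      exact (hle h)
  · have hco : (⟨A.verts, fun w1 w2 => ∃ (h1 : w1 ∈ A.verts) (h2 : w2 ∈ A.verts),
        T.Adj ⟨w1, h1⟩ ⟨w2, h2⟩, by rintro w1 w2 ⟨h1, h2, h⟩; exact A.adj_sub ((hle h)),
        by rintro w1 w2 ⟨h1, h2, h⟩; exact h1,
        by refine ⟨?_⟩; rintro w1 w2 ⟨h1, h2, h⟩; exact ⟨h2, h1, h.symm⟩⟩ : H.Subgraph).coe = T := by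
      ext ⟨w1, h1⟩ ⟨w2, h2⟩
      simp only [Subgraph.coe_adj]
      exact ⟨fun ⟨_, _, h⟩ => h, fun h => ⟨h1, h2, h⟩⟩
    rw [hco]
    exact hT

lemma top_connected {W : Type u} {H : SimpleGraph W} (h : H.Connected) :
    (⊤ : H.Subgraph).Connected := by
  rw [Subgraph.connected_iff_forall_exists_walk_subgraph]
  refine ⟨⟨h.nonempty.some, trivial⟩, ?_⟩
  intro a b _ _
  exact (h.preconnected a b).elim fun p => ⟨p, le_top⟩

lemma rainbow_of_connected {W : Type u} [Fintype W] [DecidableEq W] {H : SimpleGraph W}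
    {α : Type*} (c : Sym2 W → α) (k : ℕ)
    (h : ∀ S : Finset W, S.card = k →
      ∃ A : H.Subgraph, A.Connected ∧ ↑S ⊆ A.verts ∧ Set.InjOn c A.edgeSet) :
    H.IsRainbowColoring k c := by
  intro S hS
  obtain ⟨A, hA, hSA, hinj⟩ := h S hS
  obtain ⟨B, hBv, hBe, hBt⟩ := subgraph_spanning_tree A hA
  exact ⟨B, hBt, hBv ▸ hSA, hinj.mono hBe⟩

lemma exists_rainbow {V : Type u} [Fintype V] [DecidableEq V] {G : SimpleGraph V}
    (hG : G.Connected) :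
    ∃ (q : ℕ) (c : Sym2 V → Fin q), G.IsRainbowColoring 3 c := by
  refine ⟨Fintype.card (Sym2 V), Fintype.equivFin (Sym2 V), rainbow_of_connected _ 3 ?_⟩
  intro S hS
  exact ⟨⊤, top_connected hG, by simp, (Fintype.equivFin (Sym2 V)).injective.injOn⟩

lemma rxk_le {V : Type u} [Fintype V] [DecidableEq V] {G : SimpleGraph V} {q : ℕ}
    (c : Sym2 V → Fin q) (h : G.IsRainbowColoring 3 c) : G.rxk 3 ≤ q :=
  Nat.sInf_le ⟨c, h⟩

lemma exists_rxk_coloring {V : Type u} [Fintype V] [DecidableEq V] {G : SimpleGraph V}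
    (hG : G.Connected) :
    ∃ c : Sym2 V → Fin (G.rxk 3), G.IsRainbowColoring 3 c := by
  have hne : {q | ∃ c : Sym2 V → Fin q, G.IsRainbowColoring 3 c}.Nonempty :=
    let ⟨q, c, h⟩ := exists_rainbow hG; ⟨q, c, h⟩
  exact Nat.sInf_mem hne
end Block2

section Block3
variable {V W : Type u} [DecidableEq V] {G : SimpleGraph V} {H : SimpleGraph W} {u v : V}

/-- Auxiliary color function on `Option V`. -/
def auxColor {q : ℕ} (c : Sym2 V → Fin q) (u v : V) : Option V → Option V → Fin (q + 1)
  | some a, some b => (c s(a, b)).castSucc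
  | some a, none => if a = u then (c s(u, v)).castSucc else Fin.last q
  | none, some b => if b = u then (c s(u, v)).castSucc else Fin.last q
  | none, none => Fin.last q

lemma auxColor_comm {q : ℕ} (c : Sym2 V → Fin q) (u v : V) (o1 o2 : Option V) :
    auxColor c u v o1 o2 = auxColor c u v o2 o1 := by
  cases o1 <;> cases o2 <;> simp only [auxColor]
  rw [Sym2.eq_swap]

/-- The extended coloring on `Sym2 W`. -/
def extColor {q : ℕ} (f : W ≃ Option V) (c : Sym2 V → Fin q) (u v : V) : Sym2 W → Fin (q + 1) :=
  Sym2.lift ⟨fun w1 w2 => auxColor c u v (f w1) (f w2),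
    fun w1 w2 => auxColor_comm c u v (f w1) (f w2)⟩

lemma extColor_gg {q : ℕ} (f : W ≃ Option V) (c : Sym2 V → Fin q) (u v : V) (a b : V) :
    extColor f c u v s(f.symm (some a), f.symm (some b)) = (c s(a, b)).castSucc := by
  simp [extColor, auxColor]

lemma extColor_map {q : ℕ} (f : W ≃ Option V) (c : Sym2 V → Fin q) (u v : V) (e : Sym2 V) :
    extColor f c u v (Sym2.map (fun a => f.symm (some a)) e) = (c e).castSucc := by
  induction e with
  | _ a b => rw [Sym2.map_pair_eq]; exact extColor_gg f c u v a b

lemma extColor_xu {q : ℕ} (f : W ≃ Option V) (c : Sym2 V → Fin q) (u v : V) :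
    extColor f c u v s(f.symm none, f.symm (some u)) = (c s(u, v)).castSucc := by
  simp [extColor, auxColor]

lemma extColor_xv {q : ℕ} (f : W ≃ Option V) (c : Sym2 V → Fin q) (u v : V) (h : v ≠ u) :
    extColor f c u v s(f.symm none, f.symm (some v)) = Fin.last q := by
  simp [extColor, auxColor, h]

section Step

variable (f : W ≃ Option V)
  (hf1 : ∀ a b : V, H.Adj (f.symm (some a)) (f.symm (some b)) ↔
      (G.Adj a b ∧ s(a, b) ≠ s(u, v)))
  (hf2 : ∀ a : V, H.Adj (f.symm none) (f.symm (some a)) ↔ (a = u ∨ a = v))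

/-- The transported subgraph. -/
def stepSub (T : G.Subgraph) (addx : Prop) : H.Subgraph where
  verts := (fun a => f.symm (some a)) '' T.verts ∪
    {w | (s(u, v) ∈ T.edgeSet ∨ (addx ∧ v ∈ T.verts)) ∧ w = f.symm none}
  Adj w1 w2 :=
    (∃ a b, T.Adj a b ∧ s(a, b) ≠ s(u, v) ∧ w1 = f.symm (some a) ∧ w2 = f.symm (some b)) ∨
    (s(u, v) ∈ T.edgeSet ∧
      ((w1 = f.symm none ∧ w2 = f.symm (some u)) ∨ (w2 = f.symm none ∧ w1 = f.symm (some u)))) ∨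
    ((s(u, v) ∈ T.edgeSet ∨ (addx ∧ v ∈ T.verts)) ∧
      ((w1 = f.symm none ∧ w2 = f.symm (some v)) ∨ (w2 = f.symm none ∧ w1 = f.symm (some v))))
  adj_sub := by
    rintro w1 w2 (⟨a, b, hT, hne, rfl, rfl⟩ | ⟨hE, (⟨rfl, rfl⟩ | ⟨rfl, rfl⟩)⟩ |
      ⟨hQ, (⟨rfl, rfl⟩ | ⟨rfl, rfl⟩)⟩)
    · exact (hf1 a b).2 ⟨T.adj_sub hT, hne⟩
    · exact (hf2 u).2 (Or.inl rfl)
    · exact ((hf2 u).2 (Or.inl rfl)).symm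
    · exact (hf2 v).2 (Or.inr rfl)
    · exact ((hf2 v).2 (Or.inr rfl)).symm
  edge_vert := by
    rintro w1 w2 (⟨a, b, hT, hne, rfl, rfl⟩ | ⟨hE, (⟨rfl, rfl⟩ | ⟨rfl, rfl⟩)⟩ |
      ⟨hQ, (⟨rfl, rfl⟩ | ⟨rfl, rfl⟩)⟩)
    · exact Or.inl ⟨a, T.edge_vert hT, rfl⟩
    · exact Or.inr ⟨Or.inl hE, rfl⟩
    · exact Or.inl ⟨u, T.edge_vert (Subgraph.mem_edgeSet.mp hE), rfl⟩
    · exact Or.inr ⟨hQ, rfl⟩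
    · refine Or.inl ⟨v, ?_, rfl⟩
      rcases hQ with hE | ⟨_, hv⟩
      · exact T.edge_vert (Subgraph.mem_edgeSet.mp hE).symm
      · exact hv
  symm := by
    refine ⟨?_⟩; rintro w1 w2 (⟨a, b, hT, hne, rfl, rfl⟩ | ⟨hE, h⟩ | ⟨hQ, h⟩)
    · exact Or.inl ⟨b, a, hT.symm, by rw [Sym2.eq_swap]; exact hne, rfl, rfl⟩
    · exact Or.inr (Or.inl ⟨hE, h.symm⟩)
    · exact Or.inr (Or.inr ⟨hQ, h.symm⟩)

lemma stepSub_walk (T : G.Subgraph) (addx : Prop)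
    {a b : V} (p : G.Walk a b) (hp : p.toSubgraph ≤ T) :
    ∃ q : H.Walk (f.symm (some a)) (f.symm (some b)),
      q.toSubgraph ≤ stepSub f hf1 hf2 T addx := by
  induction p with
  | nil =>
    refine ⟨Walk.nil, ?_⟩
    rw [Walk.toSubgraph, singletonSubgraph_le_iff] at hp ⊢
    exact Or.inl ⟨_, hp, rfl⟩
  | @cons a z b h p ih =>
    rw [Walk.toSubgraph, sup_le_iff] at hp
    have h1 : T.Adj a z := hp.1.2 (by simp)
    obtain ⟨qw, hqw⟩ := ih hp.2
    by_cases he : s(a, z) = s(u, v)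
    · have hE : s(u, v) ∈ T.edgeSet := he ▸ Subgraph.mem_edgeSet.mpr h1
      rw [Sym2.eq_iff] at he
      rcases he with ⟨ha, hz⟩ | ⟨ha, hz⟩
      · have e1 : (stepSub f hf1 hf2 T addx).Adj (f.symm (some a)) (f.symm none) := by
          rw [ha]; exact Or.inr (Or.inl ⟨hE, Or.inr ⟨rfl, rfl⟩⟩)
        have e2 : (stepSub f hf1 hf2 T addx).Adj (f.symm none) (f.symm (some z)) := by
          rw [hz]; exact Or.inr (Or.inr ⟨Or.inl hE, Or.inl ⟨rfl, rfl⟩⟩)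
        refine ⟨Walk.cons ((stepSub f hf1 hf2 T addx).adj_sub e1)
          (Walk.cons ((stepSub f hf1 hf2 T addx).adj_sub e2) qw), ?_⟩
        rw [Walk.toSubgraph, Walk.toSubgraph]
        exact sup_le (subgraphOfAdj_le_of_adj _ e1)
          (sup_le (subgraphOfAdj_le_of_adj _ e2) hqw)
      · have e1 : (stepSub f hf1 hf2 T addx).Adj (f.symm (some a)) (f.symm none) := by
          rw [ha]; exact Or.inr (Or.inr ⟨Or.inl hE, Or.inr ⟨rfl, rfl⟩⟩)
        have e2 : (stepSub f hf1 hf2 T addx).Adj (f.symm none) (f.symm (some z)) := by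
          rw [hz]; exact Or.inr (Or.inl ⟨hE, Or.inl ⟨rfl, rfl⟩⟩)
        refine ⟨Walk.cons ((stepSub f hf1 hf2 T addx).adj_sub e1)
          (Walk.cons ((stepSub f hf1 hf2 T addx).adj_sub e2) qw), ?_⟩
        rw [Walk.toSubgraph, Walk.toSubgraph]
        exact sup_le (subgraphOfAdj_le_of_adj _ e1)
          (sup_le (subgraphOfAdj_le_of_adj _ e2) hqw)
    · have e1 : (stepSub f hf1 hf2 T addx).Adj (f.symm (some a)) (f.symm (some z)) :=
        Or.inl ⟨a, z, h1, he, rfl, rfl⟩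
      refine ⟨Walk.cons ((stepSub f hf1 hf2 T addx).adj_sub e1) qw, ?_⟩
      rw [Walk.toSubgraph]
      exact sup_le (subgraphOfAdj_le_of_adj _ e1) hqw

lemma stepSub_connected (T : G.Subgraph) (hTc : T.Connected) (addx : Prop) :
    (stepSub f hf1 hf2 T addx).Connected := by
  rw [Subgraph.connected_iff_forall_exists_walk_subgraph]
  have key : ∀ a ∈ T.verts, ∀ b ∈ T.verts,
      ∃ q : H.Walk (f.symm (some a)) (f.symm (some b)),
        q.toSubgraph ≤ stepSub f hf1 hf2 T addx := by
    intro a ha b hb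
    obtain ⟨p, hp⟩ := (Subgraph.preconnected_iff_forall_exists_walk_subgraph T).mp
      hTc.preconnected ha hb
    exact stepSub_walk f hf1 hf2 T addx p hp
  have hx : ∀ (hQ : s(u, v) ∈ T.edgeSet ∨ (addx ∧ v ∈ T.verts)),
      v ∈ T.verts ∧ ∃ q : H.Walk (f.symm none) (f.symm (some v)),
        q.toSubgraph ≤ stepSub f hf1 hf2 T addx := by
    intro hQ
    have hv : v ∈ T.verts := by
      rcases hQ with hE | ⟨_, hv⟩
      · exact T.edge_vert (Subgraph.mem_edgeSet.mp hE).symm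
      · exact hv
    have e1 : (stepSub f hf1 hf2 T addx).Adj (f.symm none) (f.symm (some v)) :=
      Or.inr (Or.inr ⟨hQ, Or.inl ⟨rfl, rfl⟩⟩)
    refine ⟨hv, Walk.cons ((stepSub f hf1 hf2 T addx).adj_sub e1) Walk.nil, ?_⟩
    rw [Walk.toSubgraph, Walk.toSubgraph]
    refine sup_le (subgraphOfAdj_le_of_adj _ e1) ?_
    rw [singletonSubgraph_le_iff]
    exact Or.inl ⟨v, hv, rfl⟩
  constructor
  · obtain ⟨a, ha⟩ := hTc.nonempty
    exact ⟨f.symm (some a), Or.inl ⟨a, ha, rfl⟩⟩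
  · rintro w1 w2 (⟨a, ha, rfl⟩ | ⟨hQ, rfl⟩) <;> rintro (⟨b, hb, rfl⟩ | ⟨hQ', rfl⟩)
    · exact key a ha b hb
    · obtain ⟨hv, xw, hxw⟩ := hx hQ'
      obtain ⟨pw, hpw⟩ := key a ha v hv
      refine ⟨pw.append xw.reverse, ?_⟩
      rw [Walk.toSubgraph_append, Walk.toSubgraph_reverse]
      exact sup_le hpw hxw
    · obtain ⟨hv, xw, hxw⟩ := hx hQ
      obtain ⟨pw, hpw⟩ := key v hv b hb
      refine ⟨xw.append pw, ?_⟩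
      rw [Walk.toSubgraph_append]
      exact sup_le hxw hpw
    · refine ⟨Walk.nil, ?_⟩
      rw [Walk.toSubgraph, singletonSubgraph_le_iff]
      exact Or.inr ⟨hQ, rfl⟩

lemma stepSub_edgeSet (T : G.Subgraph) (addx : Prop) :
    (stepSub f hf1 hf2 T addx).edgeSet ⊆
      (Sym2.map (fun a => f.symm (some a)) '' (T.edgeSet \ {s(u, v)})) ∪
      {e | s(u, v) ∈ T.edgeSet ∧ e = s(f.symm none, f.symm (some u))} ∪
      {s(f.symm none, f.symm (some v))} := by
  intro e he
  induction e with
  | _ w1 w2 =>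
    rw [Subgraph.mem_edgeSet] at he
    rcases he with ⟨a, b, hT, hne, rfl, rfl⟩ | ⟨hE, (⟨rfl, rfl⟩ | ⟨rfl, rfl⟩)⟩ |
      ⟨hQ, (⟨rfl, rfl⟩ | ⟨rfl, rfl⟩)⟩
    · exact Or.inl (Or.inl ⟨s(a, b), ⟨Subgraph.mem_edgeSet.mpr hT, hne⟩, by
        rw [Sym2.map_pair_eq]⟩)
    · exact Or.inl (Or.inr ⟨hE, rfl⟩)
    · exact Or.inl (Or.inr ⟨hE, Sym2.eq_swap⟩)
    · exact Or.inr rfl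
    · exact Or.inr Sym2.eq_swap

lemma injOn_extColor {q : ℕ} (c : Sym2 V → Fin q) (hvu : v ≠ u) {T : G.Subgraph}
    (hinj : Set.InjOn c T.edgeSet) :
    Set.InjOn (extColor f c u v)
      ((Sym2.map (fun a => f.symm (some a)) '' (T.edgeSet \ {s(u, v)})) ∪
      {e | s(u, v) ∈ T.edgeSet ∧ e = s(f.symm none, f.symm (some u))} ∪
      {s(f.symm none, f.symm (some v))}) := by
  have hlast : ∀ (i : Fin q), i.castSucc ≠ Fin.last q := fun i => (Fin.castSucc_lt_last i).ne
  rintro e1 ((⟨e0, ⟨he0, hne0⟩, rfl⟩ | ⟨hE1, rfl⟩) | h1) e2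
    ((⟨e0', ⟨he0', hne0'⟩, rfl⟩ | ⟨hE2, rfl⟩) | h2) heq
  · rw [extColor_map, extColor_map, Fin.castSucc_inj] at heq
    rw [hinj he0 he0' heq]
  · rw [extColor_map, extColor_xu, Fin.castSucc_inj] at heq
    exact absurd (hinj he0 hE2 heq) hne0
  · rw [Set.mem_singleton_iff] at h2; subst h2
    rw [extColor_map, extColor_xv f c u v hvu] at heq
    exact absurd heq (hlast _)
  · rw [extColor_map, extColor_xu, Fin.castSucc_inj] at heq
    exact absurd (hinj hE1 he0' heq).symm hne0'
  · rfl
  · rw [Set.mem_singleton_iff] at h2; subst h2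
    rw [extColor_xu, extColor_xv f c u v hvu] at heq
    exact absurd heq (hlast _)
  · rw [Set.mem_singleton_iff] at h1; subst h1
    rw [extColor_map, extColor_xv f c u v hvu] at heq
    exact absurd heq.symm (hlast _)
  · rw [Set.mem_singleton_iff] at h1; subst h1
    rw [extColor_xu, extColor_xv f c u v hvu] at heq
    exact absurd heq.symm (hlast _)
  · rw [Set.mem_singleton_iff] at h1 h2; rw [h1, h2]

end Step
end Block3

section Block4
variable {V W : Type u} [DecidableEq V] {G : SimpleGraph V} {H : SimpleGraph W} {u v : V}

lemma w_cases (f : W ≃ Option V) (w : W) : w = f.symm none ∨ ∃ a, w = f.symm (some a) := by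
  cases h : f w with
  | none => exact Or.inl (by rw [← h, Equiv.symm_apply_apply])
  | some a => exact Or.inr ⟨a, by rw [← h, Equiv.symm_apply_apply]⟩

section Step

variable (f : W ≃ Option V)
  (hf1 : ∀ a b : V, H.Adj (f.symm (some a)) (f.symm (some b)) ↔
      (G.Adj a b ∧ s(a, b) ≠ s(u, v)))
  (hf2 : ∀ a : V, H.Adj (f.symm none) (f.symm (some a)) ↔ (a = u ∨ a = v))

include f hf1 hf2 in
lemma step_H_connected (hG : G.Connected) : H.Connected := by
  have hgg : ∀ a b : V, H.Reachable (f.symm (some a)) (f.symm (some b)) := by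
    intro a b
    refine (hG.preconnected a b).elim fun p => ?_
    induction p with
    | nil => exact Reachable.refl _
    | @cons a z b h q ih =>
      refine Reachable.trans ?_ ih
      by_cases he : s(a, z) = s(u, v)
      · rw [Sym2.eq_iff] at he
        rcases he with ⟨ha, hz⟩ | ⟨ha, hz⟩
        · have e1 : H.Adj (f.symm (some a)) (f.symm none) := by
            rw [ha]; exact ((hf2 u).2 (Or.inl rfl)).symm
          have e2 : H.Adj (f.symm none) (f.symm (some z)) := by
            rw [hz]; exact (hf2 v).2 (Or.inr rfl)
          exact e1.reachable.trans e2.reachable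
        · have e1 : H.Adj (f.symm (some a)) (f.symm none) := by
            rw [ha]; exact ((hf2 v).2 (Or.inr rfl)).symm
          have e2 : H.Adj (f.symm none) (f.symm (some z)) := by
            rw [hz]; exact (hf2 u).2 (Or.inl rfl)
          exact e1.reachable.trans e2.reachable
      · exact ((hf1 a z).2 ⟨h, he⟩).reachable
  haveI : Nonempty W := ⟨f.symm none⟩
  have hxu : H.Reachable (f.symm none) (f.symm (some u)) := ((hf2 u).2 (Or.inl rfl)).reachable
  refine Connected.mk fun w1 w2 => ?_
  have key : ∀ w : W, H.Reachable w (f.symm (some u)) := by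
    intro w
    rcases w_cases f w with rfl | ⟨a, rfl⟩
    · exact hxu
    · exact hgg a u
  exact (key w1).trans (key w2).symm

end Step
end Block4

section Block5

lemma rxk_congr {V : Type u} (i1 i2 : DecidableEq V) (G : SimpleGraph V) (k : ℕ) :
    @SimpleGraph.rxk V i1 G k = @SimpleGraph.rxk V i2 G k := by
  have : i1 = i2 := by
    funext a b
    exact Subsingleton.elim _ _
  rw [this]

lemma step_main {V W : Type u} [Fintype V] [DecidableEq V] [Fintype W] [DecidableEq W]
    {G : SimpleGraph V} {H : SimpleGraph W} (hG : G.Connected)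
    (hstep : SubdivisionStep ⟨V, G⟩ ⟨W, H⟩) :
    H.Connected ∧ Fintype.card W = Fintype.card V + 1 ∧ H.rxk 3 ≤ G.rxk 3 + 1 := by
  obtain ⟨u, v, huv, f, hf1, hf2⟩ := hstep
  refine ⟨step_H_connected f hf1 hf2 hG,
    by rw [Fintype.card_congr f, Fintype.card_option], ?_⟩
  obtain ⟨c, hc⟩ := exists_rxk_coloring hG
  refine rxk_le (extColor f c u v) ?_
  apply rainbow_of_connected
  intro S hS
  classical
  have hginj : Function.Injective (fun a : V => f.symm (some a)) :=
    fun a b h => Option.some_injective V (f.symm.injective h)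
  have main : ∀ B : Finset V, B.card = 3 → ((f.symm none : W) ∈ S → v ∈ B) →
      (∀ w ∈ S, w ≠ f.symm none → ∃ a ∈ B, w = f.symm (some a)) →
      ∃ A : H.Subgraph, A.Connected ∧ ↑S ⊆ A.verts ∧
        Set.InjOn (extColor f c u v) A.edgeSet := by
    intro B hB3 hvB hcover
    obtain ⟨T, hTtree, hTS, hTinj⟩ := hc B hB3
    refine ⟨stepSub f hf1 hf2 T ((f.symm none : W) ∈ S),
      stepSub_connected f hf1 hf2 T (SimpleGraph.Subgraph.connected_iff'.mpr hTtree.isConnected) _, ?_,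
      (injOn_extColor f c huv.ne' hTinj).mono (stepSub_edgeSet f hf1 hf2 T _)⟩
    intro w hw
    rw [Finset.mem_coe] at hw
    by_cases hwx : w = f.symm none
    · subst hwx
      have hwS : (f.symm none : W) ∈ S := by exact_mod_cast hw
      exact Or.inr ⟨Or.inr ⟨hwS, hTS (by exact_mod_cast hvB hwS)⟩, rfl⟩
    · obtain ⟨a, haB, rfl⟩ := hcover w (by exact_mod_cast hw) hwx
      exact Or.inl ⟨a, hTS (by exact_mod_cast haB), rfl⟩
  set A : Finset V := Finset.univ.filter (fun a => f.symm (some a) ∈ S) with hAdef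
  have hgA : ∀ a : V, a ∈ A ↔ f.symm (some a) ∈ S := by
    intro a; simp [hAdef]
  have himg : A.image (fun a : V => f.symm (some a)) = S.erase (f.symm none) := by
    ext w
    simp only [Finset.mem_image, Finset.mem_erase]
    constructor
    · rintro ⟨a, ha, rfl⟩
      exact ⟨fun h => Option.some_ne_none a (f.symm.injective h), (hgA a).1 ha⟩
    · rintro ⟨hne, hw⟩
      rcases w_cases f w with rfl | ⟨a, rfl⟩
      · exact absurd rfl hne
      · exact ⟨a, (hgA a).2 hw, rfl⟩
  have hAcard : A.card = (S.erase (f.symm none)).card := by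
    rw [← himg, Finset.card_image_of_injective _ hginj]
  have hcover : ∀ w ∈ S, w ≠ f.symm none → ∃ a ∈ A, w = f.symm (some a) := by
    intro w hw hne
    rcases w_cases f w with rfl | ⟨a, rfl⟩
    · exact absurd rfl hne
    · exact ⟨a, (hgA a).2 hw, rfl⟩
  by_cases hx : (f.symm none : W) ∈ S
  · have hA2 : A.card = 2 := by rw [hAcard, Finset.card_erase_of_mem hx, hS]
    by_cases h3 : 3 ≤ Fintype.card V
    · obtain ⟨B, hAB, -, hB3⟩ := Finset.exists_subsuperset_card_eq
        (Finset.subset_univ (insert v A))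
        (le_trans (Finset.card_insert_le v A) (by rw [hA2]))
        (by rwa [Finset.card_univ])
      refine main B hB3 (fun _ => hAB (Finset.mem_insert_self v A)) ?_
      intro w hw hne
      obtain ⟨a, ha, he⟩ := hcover w hw hne
      exact ⟨a, hAB (Finset.mem_insert_of_mem ha), he⟩
    · have hall : ∀ a : V, a = u ∨ a = v := by
        by_contra hcon
        push_neg at hcon
        obtain ⟨a, hau, hav⟩ := hcon
        have h1 : ({a, u, v} : Finset V).card = 3 := by
          rw [Finset.card_insert_of_notMem (by simp [hau, hav]),
            Finset.card_insert_of_notMem (by simp [huv.ne]), Finset.card_singleton]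
        exact h3 (by rw [← h1, ← Finset.card_univ]
                     exact Finset.card_le_card (Finset.subset_univ _))
      have e1 : H.Adj (f.symm (some u)) (f.symm none) := ((hf2 u).2 (Or.inl rfl)).symm
      have e2 : H.Adj (f.symm none) (f.symm (some v)) := (hf2 v).2 (Or.inr rfl)
      refine ⟨(Walk.cons e1 (Walk.cons e2 Walk.nil)).toSubgraph,
        Walk.toSubgraph_connected _, ?_, ?_⟩
      · intro w hw
        rw [Finset.mem_coe] at hw
        rw [Walk.verts_toSubgraph]
        simp only [Walk.support_cons, Walk.support_nil, List.mem_cons, Set.mem_setOf_eq,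
          List.not_mem_nil, or_false]
        by_cases hwx : w = f.symm none
        · exact Or.inr (Or.inl hwx)
        · obtain ⟨a, -, rfl⟩ := hcover w (by exact_mod_cast hw) hwx
          rcases hall a with rfl | rfl
          · exact Or.inl rfl
          · exact Or.inr (Or.inr rfl)
      · have hc1 : extColor f c u v s(f.symm (some u), f.symm none)
            = (c s(u, v)).castSucc := by
          rw [Sym2.eq_swap]; exact extColor_xu f c u v
        have hc2 : extColor f c u v s(f.symm none, f.symm (some v))
            = Fin.last (G.rxk 3) := extColor_xv f c u v huv.ne'
        intro ea hea eb heb heq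
        rw [Walk.edgeSet_toSubgraph] at hea heb
        simp only [Walk.mem_edgeSet, Walk.edges_cons, Walk.edges_nil, List.mem_cons, List.not_mem_nil,
          or_false, Set.mem_setOf_eq] at hea heb
        rcases hea with rfl | rfl <;> rcases heb with rfl | rfl
        · rfl
        · rw [hc1, hc2] at heq
          exact absurd heq (Fin.castSucc_lt_last _).ne
        · rw [hc1, hc2] at heq
          exact absurd heq.symm (Fin.castSucc_lt_last _).ne
        · rfl
  · have hA3 : A.card = 3 := by rw [hAcard, Finset.erase_eq_of_notMem hx, hS]
    exact main A hA3 (fun h => absurd h hx) hcover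

end Block5

theorem stmt_15 {V W : Type u} [Fintype V] [DecidableEq V] [Fintype W] [DecidableEq W]
    (G : SimpleGraph V) (H : SimpleGraph W)
    (hconn : G.Connected) (hsub : IsSubdivision G H) :
    H.rxk 3 ≤ G.rxk 3 + (Fintype.card W - Fintype.card V) := by
  classical
  suffices h : ∀ X : GraphSig.{u}, Relation.ReflTransGen SubdivisionStep ⟨V, G⟩ X →
      Nonempty (Fintype X.1) ∧ X.2.Connected ∧ Nat.card V ≤ Nat.card X.1 ∧
        @SimpleGraph.rxk X.1 (Classical.decEq X.1) X.2 3 ≤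
          G.rxk 3 + (Nat.card X.1 - Nat.card V) by
    obtain ⟨-, -, -, hbound⟩ := h ⟨W, H⟩ hsub
    rw [rxk_congr (Classical.decEq W) ‹DecidableEq W› H 3,
      Nat.card_eq_fintype_card, Nat.card_eq_fintype_card] at hbound
    exact hbound
  intro X hX
  induction hX with
  | refl =>
    refine ⟨⟨‹Fintype V›⟩, hconn, le_rfl, ?_⟩
    rw [rxk_congr (Classical.decEq V) ‹DecidableEq V› G 3, Nat.sub_self, Nat.add_zero]
  | @tail b c hab hbc ih =>
    obtain ⟨⟨instb⟩, hbconn, hble, hbbound⟩ := ih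
    obtain ⟨u', v', huv', f', hrest1, hrest2⟩ := hbc
    haveI : Fintype b.1 := instb
    haveI instc : Fintype c.1 := Fintype.ofEquiv (Option b.1) f'.symm
    haveI : DecidableEq b.1 := Classical.decEq _
    haveI : DecidableEq c.1 := Classical.decEq _
    have hstep' : SubdivisionStep ⟨b.1, b.2⟩ ⟨c.1, c.2⟩ := ⟨u', v', huv', f', hrest1, hrest2⟩
    obtain ⟨hcconn, hcard, hrx⟩ := step_main hbconn hstep'
    rw [← Nat.card_eq_fintype_card, ← Nat.card_eq_fintype_card] at hcard
    refine ⟨⟨instc⟩, hcconn, ?_, ?_⟩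
    · omega
    · have h1 : @SimpleGraph.rxk c.1 (Classical.decEq c.1) c.2 3 ≤
          @SimpleGraph.rxk b.1 (Classical.decEq b.1) b.2 3 + 1 := by
        rw [rxk_congr (Classical.decEq c.1) ‹DecidableEq c.1› c.2 3,
          rxk_congr (Classical.decEq b.1) ‹DecidableEq b.1› b.2 3]
        exact hrx
      omega
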